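/- arXiv:1010.6036 — 8 statements merged into one kernel-verified Lean document; each statement's English description precedes it below -/
import Mathlib

section
/- If u: V → ℝ^d is a hypersphere representation of a graph G with squared radius t ≤ 1/2, then the map q: i ↦ √2 · (√(1/2 − t) ⊕ u(i)) ∈ ℝ^{1+d} is an orthonormal representation of the complement graph Ḡ, i.e., each q(i) is a unit vector and q(i) ⟂ q(j) whenever i,j are non-adjacent in Ḡ (that is, adjacent in G). -/
open scoped RealInnerProductSpace

def IsUnitDistRep {V : Type*} (G : SimpleGraph V) {d : ℕ}
    (u : V → EuclideanSpace ℝ (Fin d)) : Prop :=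
  ∀ i j, G.Adj i j → ‖u i - u j‖ = 1

def IsHypersphereRep {V : Type*} (G : SimpleGraph V) {d : ℕ}
    (u : V → EuclideanSpace ℝ (Fin d)) (t : ℝ) : Prop :=
  IsUnitDistRep G u ∧ ∀ i, ‖u i‖ ^ 2 = t

noncomputable def hypersphereNumber {V : Type*} (G : SimpleGraph V) : ℝ :=
  sInf {t | ∃ (d : ℕ) (u : V → EuclideanSpace ℝ (Fin d)), IsHypersphereRep G u t}

/-- The lifted map `i ↦ √2 (√(1/2 − t) ⊕ u(i))`. -/
noncomputable def liftRep {V : Type*} {d : ℕ} (t : ℝ)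
    (u : V → EuclideanSpace ℝ (Fin d)) : V → EuclideanSpace ℝ (Fin (d + 1)) :=
  fun i => Real.sqrt 2 •
    (WithLp.equiv 2 (Fin (d + 1) → ℝ)).symm
      (Fin.cons (Real.sqrt (1 / 2 - t)) (WithLp.equiv 2 (Fin d → ℝ) (u i)))

lemma liftRep_inner {V : Type*} {d : ℕ} {t : ℝ} (u : V → EuclideanSpace ℝ (Fin d))
    (ht : t ≤ 1 / 2) (i j : V) :
    ⟪liftRep t u i, liftRep t u j⟫ = 2 * ((1 / 2 - t) + ⟪u i, u j⟫) := by
  have key : ∀ a b : V,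
      ⟪(WithLp.equiv 2 (Fin (d + 1) → ℝ)).symm
          (Fin.cons (Real.sqrt (1 / 2 - t)) (WithLp.equiv 2 (Fin d → ℝ) (u a))),
        (WithLp.equiv 2 (Fin (d + 1) → ℝ)).symm
          (Fin.cons (Real.sqrt (1 / 2 - t)) (WithLp.equiv 2 (Fin d → ℝ) (u b)))⟫
        = (1 / 2 - t) + ⟪u a, u b⟫ := by
    intro a b
    rw [PiLp.inner_apply, PiLp.inner_apply]
    simp only [WithLp.equiv_symm_apply, PiLp.toLp_apply, RCLike.inner_apply, conj_trivial]
    rw [Fin.sum_univ_succ]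
    simp only [Fin.cons_zero, Fin.cons_succ]
    rw [Real.mul_self_sqrt (by linarith)]
    rfl
  simp only [liftRep, inner_smul_left, inner_smul_right, RCLike.conj_to_real]
  rw [key, ← mul_assoc, Real.mul_self_sqrt (by norm_num : (0:ℝ) ≤ 2)]

/-- A hypersphere representation of `G` with squared radius `t ≤ 1/2` lifts to an
orthonormal representation of the complement `Gᶜ`: unit vectors, orthogonal on pairs
nonadjacent in `Gᶜ` (i.e. adjacent in `G`). -/
theorem liftRep_orthonormalRep {V : Type*} (G : SimpleGraph V) {d : ℕ} {t : ℝ}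
    (u : V → EuclideanSpace ℝ (Fin d)) (hu : IsHypersphereRep G u t) (ht : t ≤ 1 / 2) :
    (∀ i, ‖liftRep t u i‖ = 1) ∧
      (∀ i j, G.Adj i j → ⟪liftRep t u i, liftRep t u j⟫ = 0) := by
  obtain ⟨hdist, hnorm⟩ := hu
  constructor
  · intro i
    have h : ⟪liftRep t u i, liftRep t u i⟫ = 1 := by
      rw [liftRep_inner u ht, real_inner_self_eq_norm_sq, hnorm i]; ring
    have := real_inner_self_eq_norm_sq (liftRep t u i)
    nlinarith [norm_nonneg (liftRep t u i)]
  · intro i j hij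
    rw [liftRep_inner u ht]
    have h1 : ‖u i - u j‖ = 1 := hdist i j hij
    have h2 : ‖u i - u j‖ ^ 2 = ‖u i‖ ^ 2 - 2 * ⟪u i, u j⟫ + ‖u j‖ ^ 2 := by
      rw [← real_inner_self_eq_norm_sq, ← real_inner_self_eq_norm_sq,
        ← real_inner_self_eq_norm_sq, inner_sub_sub_self, real_inner_comm (u j) (u i)]; ring
    rw [h1] at h2
    rw [hnorm i, hnorm j] at h2
    nlinarith
end

section
/- A graph G is bipartite if and only if its hypersphere number satisfies t(G) ≤ 1/4. Equivalently: G admits a unit-distance representation on a sphere of radius 1/2 centered at the origin if and only if G is bipartite. -/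
open scoped RealInnerProductSpace

lemma euclidean_single_sub {n : ℕ} (i : Fin n) (a b : ℝ) :
    EuclideanSpace.single i a - EuclideanSpace.single i b = EuclideanSpace.single i (a - b) := by
  ext k; by_cases h : k = i <;> simp [EuclideanSpace.single_apply, h]

/-- Key geometric fact: in a hypersphere representation at value `t`, for any edge
`‖u i + u j‖ ^ 2 = 4 * t - 1`. -/
lemma norm_add_sq_of_adj {V : Type*} {G : SimpleGraph V} {d : ℕ}
    {u : V → EuclideanSpace ℝ (Fin d)} {t : ℝ} (h : IsHypersphereRep G u t)
    {i j : V} (hij : G.Adj i j) : ‖u i + u j‖ ^ 2 = 4 * t - 1 := by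
  have hpar := parallelogram_law_with_norm ℝ (u i) (u j)
  have h1 : ‖u i - u j‖ = 1 := h.1 i j hij
  have h2 := h.2 i
  have h3 := h.2 j
  nlinarith [hpar, h1, h2, h3]

lemma quarter_le_of_adj {V : Type*} {G : SimpleGraph V} {d : ℕ}
    {u : V → EuclideanSpace ℝ (Fin d)} {t : ℝ} (h : IsHypersphereRep G u t)
    {i j : V} (hij : G.Adj i j) : 1 / 4 ≤ t := by
  have := norm_add_sq_of_adj h hij
  nlinarith [sq_nonneg ‖u i + u j‖]

/-- Along a walk of length `n`, `u a` is close to `(-1)^n • u b`. -/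
lemma walk_bound {V : Type*} {G : SimpleGraph V} {d : ℕ}
    {u : V → EuclideanSpace ℝ (Fin d)} {t : ℝ} (h : IsHypersphereRep G u t)
    {a b : V} (p : G.Walk a b) :
    ‖u a - ((-1 : ℝ) ^ p.length) • u b‖ ≤ p.length * Real.sqrt (4 * t - 1) := by
  induction p with
  | nil => simp
  | @cons a c b hac p ih =>
    have hC : ‖u a + u c‖ = Real.sqrt (4 * t - 1) := by
      rw [← norm_add_sq_of_adj h hac, Real.sqrt_sq (norm_nonneg _)]
    have key : u a - ((-1 : ℝ) ^ (SimpleGraph.Walk.cons hac p).length) • u b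
        = (u a + u c) - (u c - ((-1 : ℝ) ^ p.length) • u b) := by
      rw [SimpleGraph.Walk.length_cons, pow_succ]
      module
    rw [key]
    calc ‖(u a + u c) - (u c - ((-1 : ℝ) ^ p.length) • u b)‖
        ≤ ‖u a + u c‖ + ‖u c - ((-1 : ℝ) ^ p.length) • u b‖ := norm_sub_le _ _
      _ ≤ Real.sqrt (4 * t - 1) + p.length * Real.sqrt (4 * t - 1) := by
          rw [hC]; exact add_le_add_right ih _
      _ = (SimpleGraph.Walk.cons hac p).length * Real.sqrt (4 * t - 1) := by
          rw [SimpleGraph.Walk.length_cons]; push_cast; ring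

/-- The set of hypersphere values is always nonempty: put vertices at scaled
standard basis vectors. -/
lemma hypersphere_set_nonempty {V : Type*} [Fintype V] (G : SimpleGraph V) :
    {t | ∃ (d : ℕ) (u : V → EuclideanSpace ℝ (Fin d)), IsHypersphereRep G u t}.Nonempty := by
  classical
  have hsq2 : ((Real.sqrt 2)⁻¹ : ℝ) ^ 2 = 1 / 2 := by
    rw [inv_pow, Real.sq_sqrt (by norm_num : (0:ℝ) ≤ 2)]; norm_num
  refine ⟨1 / 2, Fintype.card V, fun v =>
    EuclideanSpace.single (Fintype.equivFin V v) ((Real.sqrt 2)⁻¹ : ℝ), ?_, ?_⟩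
  · intro i j hij
    have hne : Fintype.equivFin V i ≠ Fintype.equivFin V j := by
      simp [hij.ne]
    show ‖EuclideanSpace.single (Fintype.equivFin V i) ((Real.sqrt 2)⁻¹ : ℝ)
        - EuclideanSpace.single (Fintype.equivFin V j) ((Real.sqrt 2)⁻¹ : ℝ)‖ = 1
    have hsq : ‖EuclideanSpace.single (Fintype.equivFin V i) ((Real.sqrt 2)⁻¹ : ℝ)
        - EuclideanSpace.single (Fintype.equivFin V j) ((Real.sqrt 2)⁻¹ : ℝ)‖ ^ 2 = 1 := by
      rw [norm_sub_sq_real, EuclideanSpace.norm_single, EuclideanSpace.norm_single,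
        EuclideanSpace.inner_single_left]
      simp only [EuclideanSpace.single_apply, hne, if_neg hne, Real.norm_eq_abs, sq_abs]
      rw [hsq2]
      simp [EuclideanSpace.single_apply, Ne.symm hne]
      norm_num
    have := Real.sqrt_sq (norm_nonneg (EuclideanSpace.single (Fintype.equivFin V i) ((Real.sqrt 2)⁻¹ : ℝ)
        - EuclideanSpace.single (Fintype.equivFin V j) ((Real.sqrt 2)⁻¹ : ℝ)))
    rw [hsq] at this
    simpa using this.symm
  · intro i
    show ‖EuclideanSpace.single (Fintype.equivFin V i) ((Real.sqrt 2)⁻¹ : ℝ)‖ ^ 2 = 1 / 2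
    rw [EuclideanSpace.norm_single, Real.norm_eq_abs, sq_abs, hsq2]

/-- A finite graph is bipartite (2-colorable) iff its hypersphere number is at most 1/4. -/
theorem bipartite_iff_hypersphereNumber_le_quarter {V : Type*} [Fintype V]
    (G : SimpleGraph V) :
    G.Colorable 2 ↔ hypersphereNumber G ≤ 1 / 4 := by
  classical
  set S := {t | ∃ (d : ℕ) (u : V → EuclideanSpace ℝ (Fin d)), IsHypersphereRep G u t} with hS
  constructor
  · -- forward: 2-colorable → t(G) ≤ 1/4
    rintro ⟨c⟩
    by_cases hV : Nonempty V
    · have hmem : (1/4 : ℝ) ∈ S := by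
        refine ⟨1, fun v => EuclideanSpace.single 0 (if c v = 0 then (1/2 : ℝ) else -1/2), ?_, ?_⟩
        · intro i j hij
          have hc : c i ≠ c j := c.valid hij
          show ‖EuclideanSpace.single (0 : Fin 1) (if c i = 0 then (1/2 : ℝ) else -1/2)
              - EuclideanSpace.single (0 : Fin 1) (if c j = 0 then (1/2 : ℝ) else -1/2)‖ = 1
          rw [euclidean_single_sub, EuclideanSpace.norm_single]
          rcases Fin.exists_fin_two.mp ⟨c i, rfl⟩ with h1 | h1 <;>
            rcases Fin.exists_fin_two.mp ⟨c j, rfl⟩ with h2 | h2 <;>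
            simp_all <;> norm_num
        · intro i
          show ‖EuclideanSpace.single (0 : Fin 1) (if c i = 0 then (1/2 : ℝ) else -1/2)‖ ^ 2 = 1/4
          rw [EuclideanSpace.norm_single]
          rcases Fin.exists_fin_two.mp ⟨c i, rfl⟩ with h1 | h1 <;> simp_all <;> norm_num
      have hbdd : BddBelow S := by
        refine ⟨0, ?_⟩
        rintro t ⟨d, u, hrep⟩
        have := hrep.2 hV.some
        nlinarith [norm_nonneg (u hV.some)]
      exact csInf_le hbdd hmem
    · -- V empty: S = univ, sInf = 0
      have hSuniv : S = Set.univ := by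
        ext t
        simp only [Set.mem_univ, iff_true, hS, Set.mem_setOf_eq]
        exact ⟨0, fun v => (hV ⟨v⟩).elim, fun i j _ => (hV ⟨i⟩).elim, fun i => (hV ⟨i⟩).elim⟩
      show sInf S ≤ 1/4
      rw [hSuniv, Real.sInf_of_not_bddBelow not_bddBelow_univ]
      norm_num
  · -- backward: t(G) ≤ 1/4 → 2-colorable
    intro hle
    -- first: every odd closed walk leads to a contradiction
    have heven : ∀ (a : V) (p : G.Walk a a), ¬ Odd p.length := by
      intro a p hodd
      have hbdd : BddBelow S := by
        refine ⟨0, ?_⟩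
        rintro t ⟨d, u, hrep⟩
        have := hrep.2 a
        nlinarith [norm_nonneg (u a)]
      set n := p.length with hn
      have hn1 : 1 ≤ n := by
        rcases hodd with ⟨k, hk⟩; omega
      have hεpos : (0:ℝ) < 1 / (4 * (n:ℝ)^2) := by positivity
      have hlt : sInf S < 1/4 + 1 / (4 * (n:ℝ)^2) := lt_of_le_of_lt hle (by linarith)
      obtain ⟨t, ⟨d, u, hrep⟩, ht⟩ :=
        (csInf_lt_iff hbdd (hypersphere_set_nonempty G)).mp hlt
      -- the walk has an edge, so t ≥ 1/4
      have hadj : ∃ i j, G.Adj i j := by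
        cases p with
        | nil => simp [hn] at hn1
        | cons h q => exact ⟨_, _, h⟩
      obtain ⟨i, j, hij⟩ := hadj
      have ht4 : 1/4 ≤ t := quarter_le_of_adj ⟨hrep.1, hrep.2⟩ hij
      -- walk bound
      have hb := walk_bound ⟨hrep.1, hrep.2⟩ p
      rw [← hn, Odd.neg_one_pow hodd] at hb
      have hua : ‖u a - (-1 : ℝ) • u a‖ = 2 * Real.sqrt t := by
        have h2a : u a - (-1 : ℝ) • u a = (2:ℝ) • u a := by module
        rw [h2a, norm_smul]
        have hna : ‖u a‖ = Real.sqrt t := by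
          rw [← hrep.2 a, Real.sqrt_sq (norm_nonneg _)]
        rw [hna]; simp
      rw [hua] at hb
      have h1 : (1:ℝ) ≤ 2 * Real.sqrt t := by
        have := Real.sqrt_le_sqrt ht4
        rw [show (1/4 : ℝ) = (1/2)^2 by norm_num, Real.sqrt_sq (by norm_num)] at this
        linarith
      have hn2 : (0:ℝ) < (n:ℝ)^2 := by positivity
      have h2 : (n:ℝ) * Real.sqrt (4*t - 1) < 1 := by
        have hlt' : 4*t - 1 < 1/(n:ℝ)^2 := by
          rw [lt_div_iff₀ hn2]
          have h4 : (0:ℝ) < 4*(n:ℝ)^2 := by positivity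
          have key : t*(4*(n:ℝ)^2) < (n:ℝ)^2 + 1 := by
            calc t*(4*(n:ℝ)^2) < (1/4 + 1/(4*(n:ℝ)^2))*(4*(n:ℝ)^2) :=
                  mul_lt_mul_of_pos_right ht h4
              _ = (n:ℝ)^2 + 1 := by field_simp; try ring
          nlinarith [key]
        have hsq : Real.sqrt (4*t-1) < Real.sqrt (1/(n:ℝ)^2) :=
          (Real.sqrt_lt_sqrt_iff (by linarith)).mpr hlt'
        rw [show (1/(n:ℝ)^2) = ((1/(n:ℝ)))^2 by ring,
          Real.sqrt_sq (by positivity)] at hsq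
        have hnpos : (0:ℝ) < n := by exact_mod_cast hn1
        calc (n:ℝ) * Real.sqrt (4*t-1) < (n:ℝ) * (1/(n:ℝ)) :=
              mul_lt_mul_of_pos_left hsq hnpos
          _ = 1 := by field_simp
      linarith
    -- build the 2-coloring from parities of walks to component roots
    have hreach : ∀ v : V, G.Reachable ((G.connectedComponentMk v).out) v := by
      intro v
      exact SimpleGraph.ConnectedComponent.exact (Quot.out_eq _)
    let c : V → Bool := fun v => decide (Odd (hreach v).some.length)
    have hvalid : ∀ i j, G.Adj i j → c i ≠ c j := by
      intro i j hij hcij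
      have hcomp : G.connectedComponentMk i = G.connectedComponentMk j :=
        SimpleGraph.ConnectedComponent.sound hij.reachable
      set r := (G.connectedComponentMk i).out with hr
      have hrj : (G.connectedComponentMk j).out = r := by rw [hr, hcomp]
      set p : G.Walk r i := (hreach i).some with hp
      set q : G.Walk r j := ((hreach j).some).copy hrj rfl with hq
      have hqlen : q.length = (hreach j).some.length := by
        rw [hq, SimpleGraph.Walk.length_copy]
      -- closed walk r → i → j → r has length p.length + 1 + q.length
      have hclosed := heven r ((p.concat hij).append q.reverse)
      rw [SimpleGraph.Walk.length_append, SimpleGraph.Walk.length_concat,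
        SimpleGraph.Walk.length_reverse, hqlen] at hclosed
      simp only [c, decide_eq_decide] at hcij
      rw [← hp] at hcij
      simp only [Nat.odd_iff] at hcij hclosed
      omega
    have hcol : G.Colorable (Fintype.card Bool) :=
      (SimpleGraph.Coloring.mk c (fun h => hvalid _ _ h)).colorable
    simpa using hcol
end

section
/- If G and H are vertex-disjoint graphs, then the hypersphere number of their disjoint union equals the maximum of their hypersphere numbers: t(G + H) = max{t(G), t(H)}. -/
open scoped RealInnerProductSpace

namespace HypersphereAux

def repSet {V : Type*} (G : SimpleGraph V) : Set ℝ :=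
  {t | ∃ (d : ℕ) (u : V → EuclideanSpace ℝ (Fin d)), IsHypersphereRep G u t}

lemma hn_eq {V : Type*} (G : SimpleGraph V) : hypersphereNumber G = sInf (repSet G) := rfl

def toEuc {n : ℕ} (f : Fin n → ℝ) : EuclideanSpace ℝ (Fin n) := WithLp.toLp 2 f

@[simp] lemma toEuc_ofLp {n : ℕ} (x : EuclideanSpace ℝ (Fin n)) : toEuc x.ofLp = x := rfl

@[simp] lemma toEuc_zero {n : ℕ} : toEuc (0 : Fin n → ℝ) = 0 := rfl

@[simp] lemma toEuc_apply {n : ℕ} (f : Fin n → ℝ) (i : Fin n) : toEuc f i = f i := rfl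

lemma norm_sq_euclidean {d : ℕ} (x : EuclideanSpace ℝ (Fin d)) :
    ‖x‖ ^ 2 = ∑ i, x i ^ 2 := by
  rw [EuclideanSpace.norm_eq, Real.sq_sqrt (by positivity)]
  simp [Real.norm_eq_abs, sq_abs]

lemma norm_sq_append' {m n : ℕ} (x : Fin m → ℝ) (y : Fin n → ℝ) :
    ‖toEuc (Fin.append x y)‖ ^ 2 = ‖toEuc x‖ ^ 2 + ‖toEuc y‖ ^ 2 := by
  simp only [norm_sq_euclidean]
  rw [Fin.sum_univ_add]
  simp [Fin.append_left, Fin.append_right]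

lemma norm_sq_append {m n : ℕ} (x : EuclideanSpace ℝ (Fin m)) (y : EuclideanSpace ℝ (Fin n)) :
    ‖toEuc (Fin.append x y)‖ ^ 2 = ‖x‖ ^ 2 + ‖y‖ ^ 2 := by
  simp only [norm_sq_euclidean]
  rw [Fin.sum_univ_add]
  simp [Fin.append_left, Fin.append_right]

lemma append_sub {m n : ℕ} (x x' : EuclideanSpace ℝ (Fin m)) (y y' : EuclideanSpace ℝ (Fin n)) :
    toEuc (Fin.append x y) - toEuc (Fin.append x' y') =
      toEuc (Fin.append (x - x') (y - y')) := by
  ext i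
  induction i using Fin.addCases with
  | left i => simp [Fin.append_left]
  | right i => simp [Fin.append_right]

lemma norm_eq_one_of_sq {x : ℝ} (h0 : 0 ≤ x) (h : x ^ 2 = 1) : x = 1 := by nlinarith

lemma norm_sq_const_fin1 (c : ℝ) : ‖toEuc (fun _ : Fin 1 => c)‖ ^ 2 = c ^ 2 := by
  rw [norm_sq_euclidean]; simp

lemma norm_sq_zero (n : ℕ) : ‖(0 : EuclideanSpace ℝ (Fin n))‖ ^ 2 = 0 := by simp

lemma repSet_upward {V : Type*} {G : SimpleGraph V} {t t' : ℝ} (ht : t ∈ repSet G)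
    (h : t ≤ t') : t' ∈ repSet G := by
  obtain ⟨d, u, hu, hn⟩ := ht
  refine ⟨d + 1, fun v => toEuc (Fin.append (u v) (fun _ : Fin 1 => Real.sqrt (t' - t))),
    ?_, ?_⟩
  · intro i j hij
    have hsub : toEuc (Fin.append (u i) (fun _ : Fin 1 => Real.sqrt (t' - t))) -
        toEuc (Fin.append (u j) (fun _ : Fin 1 => Real.sqrt (t' - t))) =
        toEuc (Fin.append (u i - u j)
          ((fun _ : Fin 1 => Real.sqrt (t' - t)) - (fun _ : Fin 1 => Real.sqrt (t' - t)))) :=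
      append_sub (u i) (u j) (toEuc fun _ => Real.sqrt (t' - t)) (toEuc fun _ => Real.sqrt (t' - t))
    apply norm_eq_one_of_sq (norm_nonneg _)
    rw [hsub]
    simp only [sub_self]
    rw [norm_sq_append', toEuc_ofLp, hu i j hij]
    simp
  · intro i
    rw [norm_sq_append', toEuc_ofLp, hn i, norm_sq_euclidean]
    simp only [toEuc_apply, Fin.sum_univ_one]
    rw [Real.sq_sqrt (by linarith)]
    linarith

lemma half_mem_repSet {V : Type*} [Fintype V] (G : SimpleGraph V) :
    (1 / 2 : ℝ) ∈ repSet G := by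
  classical
  obtain ⟨e⟩ : Nonempty (V ≃ Fin (Fintype.card V)) := ⟨Fintype.equivFin V⟩
  refine ⟨Fintype.card V, fun v => (Real.sqrt 2)⁻¹ • EuclideanSpace.single (e v) (1 : ℝ),
    ?_, ?_⟩
  · intro i j hij
    have hne : e i ≠ e j := fun hc => hij.ne (e.injective hc)
    apply norm_eq_one_of_sq (norm_nonneg _)
    rw [← smul_sub, norm_smul, mul_pow, norm_sub_sq_real]
    have h1 : ‖EuclideanSpace.single (e i) (1 : ℝ)‖ = 1 := by
      rw [EuclideanSpace.norm_single]; simp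
    have h2 : ‖EuclideanSpace.single (e j) (1 : ℝ)‖ = 1 := by
      rw [EuclideanSpace.norm_single]; simp
    have h3 : ⟪EuclideanSpace.single (e i) (1 : ℝ), EuclideanSpace.single (e j) (1 : ℝ)⟫ = 0 := by
      rw [EuclideanSpace.inner_single_left]
      simp [EuclideanSpace.single_apply, hne.symm, hij.ne]
    rw [h1, h2, h3]
    have : ‖(Real.sqrt 2)⁻¹‖ = (Real.sqrt 2)⁻¹ := by
      rw [Real.norm_eq_abs, abs_of_nonneg (by positivity)]
    rw [this, inv_pow, Real.sq_sqrt (by norm_num : (0:ℝ) ≤ 2)]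
    norm_num
  · intro i
    rw [norm_smul, mul_pow, EuclideanSpace.norm_single]
    have : ‖(Real.sqrt 2)⁻¹‖ = (Real.sqrt 2)⁻¹ := by
      rw [Real.norm_eq_abs, abs_of_nonneg (by positivity)]
    rw [this, inv_pow, Real.sq_sqrt (by norm_num : (0:ℝ) ≤ 2)]
    norm_num

lemma repSet_nonneg {V : Type*} [Nonempty V] {G : SimpleGraph V} {t : ℝ}
    (ht : t ∈ repSet G) : 0 ≤ t := by
  obtain ⟨d, u, _, hn⟩ := ht
  rw [← hn (Classical.arbitrary V)]
  positivity

lemma repSet_univ {V : Type*} [IsEmpty V] (G : SimpleGraph V) : repSet G = Set.univ := by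
  ext t
  simp only [Set.mem_univ, iff_true]
  exact ⟨0, fun v => isEmptyElim v, fun i j => isEmptyElim i, fun i => isEmptyElim i⟩

lemma sInf_univ_real : sInf (Set.univ : Set ℝ) = 0 := by
  apply Real.sInf_of_not_bddBelow
  rintro ⟨x, hx⟩
  have := hx (Set.mem_univ (x - 1))
  linarith

lemma sInf_repSet_nonneg {V : Type*} [Fintype V] (G : SimpleGraph V) :
    0 ≤ sInf (repSet G) := by
  by_cases h : Nonempty V
  · exact Real.sInf_nonneg fun x hx => repSet_nonneg hx
  · rw [not_nonempty_iff] at h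
    rw [repSet_univ, sInf_univ_real]

variable {α β : Type*} {G : SimpleGraph α} {H : SimpleGraph β}

lemma mem_repSet_left {t : ℝ} (h : t ∈ repSet (G ⊕g H)) : t ∈ repSet G := by
  obtain ⟨d, u, hu, hn⟩ := h
  exact ⟨d, u ∘ Sum.inl, fun i j hij =>
    hu _ _ (SimpleGraph.Embedding.sumInl.map_adj_iff.mpr hij), fun i => hn _⟩

lemma mem_repSet_right {t : ℝ} (h : t ∈ repSet (G ⊕g H)) : t ∈ repSet H := by
  obtain ⟨d, u, hu, hn⟩ := h
  exact ⟨d, u ∘ Sum.inr, fun i j hij =>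
    hu _ _ (SimpleGraph.Embedding.sumInr.map_adj_iff.mpr hij), fun i => hn _⟩

lemma mem_repSet_sum {t : ℝ} (hG : t ∈ repSet G) (hH : t ∈ repSet H) :
    t ∈ repSet (G ⊕g H) := by
  obtain ⟨d₁, u, hu, hnu⟩ := hG
  obtain ⟨d₂, v, hv, hnv⟩ := hH
  refine ⟨d₁ + d₂, Sum.elim (fun a => toEuc (Fin.append (u a) (0 : EuclideanSpace ℝ (Fin d₂))))
    (fun b => toEuc (Fin.append (0 : EuclideanSpace ℝ (Fin d₁)) (v b))), ?_, ?_⟩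
  · rintro (i | i) (j | j) hij
    · have h1 : G.Adj i j := SimpleGraph.Embedding.sumInl.map_adj_iff.mp hij
      apply norm_eq_one_of_sq (norm_nonneg _)
      simp only [Sum.elim_inl]
      rw [append_sub, sub_self, norm_sq_append, hu i j h1, norm_sq_zero]
      norm_num
    · simp [SimpleGraph.sum_adj] at hij
    · simp [SimpleGraph.sum_adj] at hij
    · have h1 : H.Adj i j := SimpleGraph.Embedding.sumInr.map_adj_iff.mp hij
      apply norm_eq_one_of_sq (norm_nonneg _)
      simp only [Sum.elim_inr]
      rw [append_sub, sub_self, norm_sq_append, hv i j h1, norm_sq_zero]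
      norm_num
  · rintro (i | i)
    · simp only [Sum.elim_inl]
      rw [norm_sq_append, hnu i, norm_sq_zero, add_zero]
    · simp only [Sum.elim_inr]
      rw [norm_sq_append, hnv i, norm_sq_zero, zero_add]

lemma repSet_sum_eq : repSet (G ⊕g H) = repSet G ∩ repSet H :=
  Set.ext fun _ => ⟨fun h => ⟨mem_repSet_left h, mem_repSet_right h⟩,
    fun ⟨h1, h2⟩ => mem_repSet_sum h1 h2⟩

end HypersphereAux

open HypersphereAux in
/-- The hypersphere number of a disjoint union is the max of the hypersphere numbers. -/
theorem hypersphereNumber_sum {α β : Type*} [Fintype α] [Fintype β]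
    (G : SimpleGraph α) (H : SimpleGraph β) :
    hypersphereNumber (G ⊕g H) = max (hypersphereNumber G) (hypersphereNumber H) := by
  classical
  rw [hn_eq, hn_eq, hn_eq, repSet_sum_eq]
  by_cases hα : Nonempty α
  · by_cases hβ : Nonempty β
    · have bddG : BddBelow (repSet G) := ⟨0, fun t ht => repSet_nonneg ht⟩
      have bddH : BddBelow (repSet H) := ⟨0, fun t ht => repSet_nonneg ht⟩
      have bddI : BddBelow (repSet G ∩ repSet H) :=
        bddG.mono Set.inter_subset_left
      have neI : (repSet G ∩ repSet H).Nonempty :=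
        ⟨1 / 2, half_mem_repSet G, half_mem_repSet H⟩
      apply le_antisymm
      · refine le_of_forall_pos_le_add fun ε hε => ?_
        set M := max (sInf (repSet G)) (sInf (repSet H)) with hM
        have hG : sInf (repSet G) < M + ε :=
          lt_of_le_of_lt (le_max_left _ _) (lt_add_of_pos_right _ hε)
        have hH : sInf (repSet H) < M + ε :=
          lt_of_le_of_lt (le_max_right _ _) (lt_add_of_pos_right _ hε)
        obtain ⟨s, hs, hslt⟩ := exists_lt_of_csInf_lt ⟨1 / 2, half_mem_repSet G⟩ hG
        obtain ⟨s', hs', hslt'⟩ := exists_lt_of_csInf_lt ⟨1 / 2, half_mem_repSet H⟩ hH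
        exact csInf_le bddI ⟨repSet_upward hs hslt.le, repSet_upward hs' hslt'.le⟩
      · exact max_le (csInf_le_csInf bddG neI Set.inter_subset_left)
          (csInf_le_csInf bddH neI Set.inter_subset_right)
    · rw [not_nonempty_iff] at hβ
      rw [repSet_univ H, Set.inter_univ, sInf_univ_real,
        max_eq_left (sInf_repSet_nonneg G)]
  · rw [not_nonempty_iff] at hα
    rw [repSet_univ G, Set.univ_inter, sInf_univ_real,
      max_eq_right (sInf_repSet_nonneg H)]
end

section
/- Let G = G₁ ∪ G₂ where G₁ ∩ G₂ is a complete graph (a clique sum). Then t(G) = max{t(G₁), t(G₂)}, where t is the hypersphere number. -/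
open scoped RealInnerProductSpace

noncomputable def pd {ι κ : Type*} [Fintype ι] [Fintype κ] (x : EuclideanSpace ℝ ι)
    (y : EuclideanSpace ℝ κ) : EuclideanSpace ℝ (ι ⊕ κ) :=
  (WithLp.equiv 2 _).symm (Sum.elim (WithLp.equiv 2 _ x) (WithLp.equiv 2 _ y))

lemma pd_inner {ι κ : Type*} [Fintype ι] [Fintype κ] (x x' : EuclideanSpace ℝ ι)
    (y y' : EuclideanSpace ℝ κ) : ⟪pd x y, pd x' y'⟫ = ⟪x, x'⟫ + ⟪y, y'⟫ := by
  simp [pd, PiLp.inner_apply, Fintype.sum_sum_type, WithLp.equiv_symm_apply,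
    WithLp.equiv_apply]

lemma pd_sub {ι κ : Type*} [Fintype ι] [Fintype κ] (x x' : EuclideanSpace ℝ ι)
    (y y' : EuclideanSpace ℝ κ) : pd x y - pd x' y' = pd (x - x') (y - y') := by
  simp only [pd]
  ext k
  cases k <;> simp [WithLp.equiv_symm_apply, WithLp.equiv_apply, PiLp.sub_apply]

lemma pd_normsq {ι κ : Type*} [Fintype ι] [Fintype κ] (x : EuclideanSpace ℝ ι)
    (y : EuclideanSpace ℝ κ) : ‖pd x y‖ ^ 2 = ‖x‖ ^ 2 + ‖y‖ ^ 2 := by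
  rw [← real_inner_self_eq_norm_sq, ← real_inner_self_eq_norm_sq,
    ← real_inner_self_eq_norm_sq, pd_inner]

lemma inner_eq_of_dist_one {E : Type*} [NormedAddCommGroup E] [InnerProductSpace ℝ E]
    {x y : E} {t : ℝ} (hx : ‖x‖ ^ 2 = t) (hy : ‖y‖ ^ 2 = t) (hxy : ‖x - y‖ = 1) :
    ⟪x, y⟫ = t - 1 / 2 := by
  have h := norm_sub_sq_real x y
  rw [hx, hy, hxy] at h
  norm_num at h
  linarith

lemma exists_isometry_of_gram {ι E : Type*} [Fintype ι] [NormedAddCommGroup E]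
    [InnerProductSpace ℝ E] [FiniteDimensional ℝ E] (f g : ι → E)
    (h : ∀ i j, ⟪f i, f j⟫ = ⟪g i, g j⟫) :
    ∃ O : E →ₗᵢ[ℝ] E, ∀ i, O (g i) = f i := by
  classical
  set A := (Fintype.linearCombination ℝ g : (ι → ℝ) →ₗ[ℝ] E) with hAdef
  set B := (Fintype.linearCombination ℝ f : (ι → ℝ) →ₗ[ℝ] E) with hBdef
  have key : ∀ c : ι → ℝ, ⟪B c, B c⟫ = ⟪A c, A c⟫ := by
    intro c
    simp only [hAdef, hBdef, Fintype.linearCombination_apply, sum_inner, inner_sum,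
      real_inner_smul_left, real_inner_smul_right, h]
  have hnorm : ∀ c, ‖B c‖ = ‖A c‖ := by
    intro c
    have h2 := key c
    rw [real_inner_self_eq_norm_sq, real_inner_self_eq_norm_sq] at h2
    nlinarith [norm_nonneg (B c), norm_nonneg (A c)]
  have hker : LinearMap.ker A ≤ LinearMap.ker B := by
    intro c hc
    rw [LinearMap.mem_ker] at hc ⊢
    have := hnorm c
    rw [hc, norm_zero] at this
    exact norm_eq_zero.mp this
  let L₀ : ((ι → ℝ) ⧸ LinearMap.ker A) →ₗ[ℝ] E := (LinearMap.ker A).liftQ B hker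
  let e := A.quotKerEquivRange
  have hL : ∀ c : ι → ℝ, L₀ (e.symm ⟨A c, LinearMap.mem_range_self A c⟩) = B c := by
    intro c
    rw [A.quotKerEquivRange_symm_apply_image]
    exact Submodule.liftQ_apply _ B c
  let L : (LinearMap.range A) →ₗᵢ[ℝ] E :=
    { toLinearMap := L₀ ∘ₗ (e.symm : _ ≃ₗ[ℝ] _).toLinearMap
      norm_map' := by
        rintro ⟨x, c, rfl⟩
        have hcoe : ‖(⟨A c, LinearMap.mem_range_self A c⟩ : LinearMap.range A)‖ = ‖A c‖ := rfl
        simp only [LinearMap.coe_comp, Function.comp_apply, LinearEquiv.coe_coe]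
        rw [hcoe, hL c, hnorm c] }
  refine ⟨L.extend, fun i => ?_⟩
  have hg : g i = A (Pi.single i 1) := by
    simp [hAdef, Fintype.linearCombination_apply, Pi.single_apply, ite_smul]
  have hf : f i = B (Pi.single i 1) := by
    simp [hBdef, Fintype.linearCombination_apply, Pi.single_apply, ite_smul]
  have hmem : g i ∈ LinearMap.range A := hg ▸ LinearMap.mem_range_self A _
  have hext := L.extend_apply ⟨g i, hmem⟩
  rw [hext]
  show L ⟨g i, hmem⟩ = f i
  have heq : (⟨g i, hmem⟩ : LinearMap.range A) =
      ⟨A (Pi.single i 1), LinearMap.mem_range_self A _⟩ := Subtype.ext hg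
  rw [heq]
  show L₀ (e.symm ⟨A (Pi.single i 1), _⟩) = f i
  rw [hL, hf]

/-- every graph on a finite vertex type has a hypersphere representation with `t = 1/2`. -/
lemma exists_simplex_rep {V : Type*} [Fintype V] (G : SimpleGraph V) :
    ∃ (d : ℕ) (u : V → EuclideanSpace ℝ (Fin d)), IsHypersphereRep G u (1 / 2 : ℝ) := by
  classical
  set e := Fintype.equivFin V
  refine ⟨Fintype.card V, fun i => (Real.sqrt 2)⁻¹ • EuclideanSpace.single (e i) (1 : ℝ), ?_, ?_⟩
  · intro i j hij
    have hne : e i ≠ e j := fun h => hij.ne (e.injective h)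
    have hin : ⟪EuclideanSpace.single (e i) (1 : ℝ), EuclideanSpace.single (e j) (1 : ℝ)⟫ = 0 := by
      rw [EuclideanSpace.inner_single_left]
      simp [EuclideanSpace.single_apply, hne.symm, hij.ne]
    have hnormsq : ∀ k : V,
        ‖(Real.sqrt 2)⁻¹ • EuclideanSpace.single (e k) (1 : ℝ)‖ ^ 2 = 1 / 2 := by
      intro k
      rw [norm_smul, EuclideanSpace.norm_single, norm_one, mul_one, Real.norm_eq_abs,
        abs_of_nonneg (by positivity), inv_pow, Real.sq_sqrt (by norm_num : (0:ℝ) ≤ 2)]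
      norm_num
    have h1 : ‖(Real.sqrt 2)⁻¹ • EuclideanSpace.single (e i) (1 : ℝ) -
        (Real.sqrt 2)⁻¹ • EuclideanSpace.single (e j) (1 : ℝ)‖ ^ 2 = 1 := by
      rw [norm_sub_sq_real, hnormsq i, hnormsq j, real_inner_smul_left, real_inner_smul_right,
        hin]
      ring
    rw [← sq_eq_sq₀ (norm_nonneg _) (by norm_num : (0:ℝ) ≤ 1)]
    simpa using h1
  · intro k
    rw [norm_smul, EuclideanSpace.norm_single, norm_one, mul_one, Real.norm_eq_abs,
      abs_of_nonneg (by positivity), inv_pow, Real.sq_sqrt (by norm_num : (0:ℝ) ≤ 2)]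
    norm_num

lemma glue {V : Type*} [Fintype V] (G₁ G₂ : SimpleGraph V) (V₁ V₂ : Set V)
    (hcover : V₁ ∪ V₂ = Set.univ)
    (hE₁ : ∀ i j, G₁.Adj i j → i ∈ V₁ ∧ j ∈ V₁)
    (hE₂ : ∀ i j, G₂.Adj i j → i ∈ V₂ ∧ j ∈ V₂)
    (hclique : ∀ i ∈ V₁ ∩ V₂, ∀ j ∈ V₁ ∩ V₂, i ≠ j → G₁.Adj i j ∧ G₂.Adj i j)
    {t₁ t₂ : ℝ} (hle : t₁ ≤ t₂)
    {d₁ d₂ : ℕ} {u₁ : V → EuclideanSpace ℝ (Fin d₁)} {u₂ : V → EuclideanSpace ℝ (Fin d₂)}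
    (h₁ : IsHypersphereRep G₁ u₁ t₁) (h₂ : IsHypersphereRep G₂ u₂ t₂) :
    ∃ (d : ℕ) (u : V → EuclideanSpace ℝ (Fin d)), IsHypersphereRep (G₁ ⊔ G₂) u t₂ := by
  classical
  set c := Real.sqrt (t₂ - t₁) with hc
  set cst : EuclideanSpace ℝ Unit := (WithLp.equiv 2 _).symm (fun _ => c) with hcst
  have hcstsq : ‖cst‖ ^ 2 = t₂ - t₁ := by
    rw [← real_inner_self_eq_norm_sq]
    simp only [hcst, PiLp.inner_apply, WithLp.equiv_symm_apply, PiLp.toLp_apply, RCLike.inner_apply,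
      conj_trivial, Finset.sum_const, Finset.card_univ, Fintype.card_unit, one_smul]
    rw [hc, Real.mul_self_sqrt (sub_nonneg.mpr hle)]
  set w₁ : V → EuclideanSpace ℝ ((Fin d₁ ⊕ Fin d₂) ⊕ Unit) :=
    fun i => pd (pd (u₁ i) 0) cst with hw₁
  set w₂ : V → EuclideanSpace ℝ ((Fin d₁ ⊕ Fin d₂) ⊕ Unit) :=
    fun i => pd (pd 0 (u₂ i)) 0 with hw₂
  have hw₁t : ∀ i, ‖w₁ i‖ ^ 2 = t₂ := by
    intro i
    rw [hw₁]
    simp only [pd_normsq, hcstsq, h₁.2 i, norm_zero]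
    ring
  have hw₂t : ∀ i, ‖w₂ i‖ ^ 2 = t₂ := by
    intro i
    rw [hw₂]
    simp only [pd_normsq, h₂.2 i, norm_zero]
    ring
  have hw₁d : ∀ i j, ‖w₁ i - w₁ j‖ = ‖u₁ i - u₁ j‖ := by
    intro i j
    rw [← sq_eq_sq₀ (norm_nonneg _) (norm_nonneg _), hw₁]
    simp only [pd_sub, sub_self, sub_zero, pd_normsq, norm_zero]
    ring
  have hw₂d : ∀ i j, ‖w₂ i - w₂ j‖ = ‖u₂ i - u₂ j‖ := by
    intro i j
    rw [← sq_eq_sq₀ (norm_nonneg _) (norm_nonneg _), hw₂]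
    simp only [pd_sub, sub_self, sub_zero, pd_normsq, norm_zero]
    ring
  haveI : Fintype ↥(V₁ ∩ V₂) := Fintype.ofFinite _
  have hgram : ∀ i j : ↥(V₁ ∩ V₂), ⟪w₁ i.1, w₁ j.1⟫ = ⟪w₂ i.1, w₂ j.1⟫ := by
    intro i j
    by_cases hv : (i : V) = (j : V)
    · rw [hv, real_inner_self_eq_norm_sq, real_inner_self_eq_norm_sq, hw₁t, hw₂t]
    · obtain ⟨adj₁, adj₂⟩ := hclique i.1 i.2 j.1 j.2 hv
      have e₁ : ⟪u₁ i.1, u₁ j.1⟫ = t₁ - 1 / 2 :=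
        inner_eq_of_dist_one (h₁.2 _) (h₁.2 _) (h₁.1 _ _ adj₁)
      have e₂ : ⟪u₂ i.1, u₂ j.1⟫ = t₂ - 1 / 2 :=
        inner_eq_of_dist_one (h₂.2 _) (h₂.2 _) (h₂.1 _ _ adj₂)
      have ecst : ⟪cst, cst⟫ = t₂ - t₁ := by
        rw [real_inner_self_eq_norm_sq, hcstsq]
      rw [hw₁, hw₂]
      simp only [pd_inner, inner_zero_left, inner_zero_right, e₁, e₂, ecst]
      ring
  obtain ⟨O, hO⟩ := exists_isometry_of_gram (fun i : ↥(V₁ ∩ V₂) => w₁ i.1)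
    (fun i : ↥(V₁ ∩ V₂) => w₂ i.1) hgram
  set w : V → EuclideanSpace ℝ ((Fin d₁ ⊕ Fin d₂) ⊕ Unit) :=
    fun i => if i ∈ V₁ then w₁ i else O (w₂ i) with hw
  have hmem₂ : ∀ i, i ∉ V₁ → i ∈ V₂ := by
    intro i hi
    have : i ∈ V₁ ∪ V₂ := hcover ▸ Set.mem_univ i
    exact this.resolve_left hi
  have hOw : ∀ i (h1 : i ∈ V₁) (h2 : i ∈ V₂), O (w₂ i) = w₁ i := fun i h1 h2 => hO ⟨i, h1, h2⟩
  -- distances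
  have hdist : ∀ i j, (G₁ ⊔ G₂).Adj i j → ‖w i - w j‖ = 1 := by
    intro i j hadj
    rcases hadj with hadj | hadj
    · obtain ⟨hi, hj⟩ := hE₁ i j hadj
      rw [hw]
      simp only [hi, hj, if_pos]
      rw [hw₁d, h₁.1 i j hadj]
    · obtain ⟨hi2, hj2⟩ := hE₂ i j hadj
      have base : ‖O (w₂ i) - O (w₂ j)‖ = 1 := by
        rw [← map_sub, O.norm_map, hw₂d, h₂.1 i j hadj]
      rw [hw]
      by_cases hi1 : i ∈ V₁ <;> by_cases hj1 : j ∈ V₁ <;>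
        simp only [hi1, hj1, if_pos, if_neg, if_true, if_false]
      · have hadj₁ : G₁.Adj i j := (hclique i ⟨hi1, hi2⟩ j ⟨hj1, hj2⟩ hadj.ne).1
        rw [hw₁d, h₁.1 i j hadj₁]
      · rw [← hOw i hi1 hi2]; exact base
      · rw [← hOw j hj1 hj2]; exact base
      · exact base
  have hnorm : ∀ i, ‖w i‖ ^ 2 = t₂ := by
    intro i
    rw [hw]
    by_cases hi : i ∈ V₁ <;> simp only [hi, if_true, if_false]
    · exact hw₁t i
    · rw [O.norm_map]; exact hw₂t i
  -- transport to a `Fin`-indexed Euclidean space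
  set n := Fintype.card ((Fin d₁ ⊕ Fin d₂) ⊕ Unit)
  set Φ := LinearIsometryEquiv.piLpCongrLeft 2 ℝ ℝ
    (Fintype.equivFin ((Fin d₁ ⊕ Fin d₂) ⊕ Unit))
  refine ⟨n, fun i => Φ (w i), ?_, ?_⟩
  · intro i j hadj
    rw [← Φ.map_sub, Φ.norm_map]
    exact hdist i j hadj
  · intro i
    rw [Φ.norm_map]
    exact hnorm i

/-- Clique sums: if `G = G₁ ∪ G₂` where the common part `G₁ ∩ G₂` is a complete graph,
then `t(G) = max {t(G₁), t(G₂)}`. Here `G₁`, `G₂` are graphs on vertex sets `V₁`, `V₂`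
(with no edges leaving them), covering the whole vertex set, such that any two distinct
vertices of `V₁ ∩ V₂` are adjacent in both graphs. -/
theorem hypersphereNumber_cliqueSum {V : Type*} [Fintype V]
    (G₁ G₂ : SimpleGraph V) (V₁ V₂ : Set V)
    (hcover : V₁ ∪ V₂ = Set.univ)
    (hE₁ : ∀ i j, G₁.Adj i j → i ∈ V₁ ∧ j ∈ V₁)
    (hE₂ : ∀ i j, G₂.Adj i j → i ∈ V₂ ∧ j ∈ V₂)
    (hclique : ∀ i ∈ V₁ ∩ V₂, ∀ j ∈ V₁ ∩ V₂, i ≠ j → G₁.Adj i j ∧ G₂.Adj i j) :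
    hypersphereNumber (G₁ ⊔ G₂) = max (hypersphereNumber G₁) (hypersphereNumber G₂) := by
  classical
  rcases isEmpty_or_nonempty V with hV | hV
  · have huniv : ∀ G : SimpleGraph V,
        {t | ∃ (d : ℕ) (u : V → EuclideanSpace ℝ (Fin d)), IsHypersphereRep G u t} =
          Set.univ := by
      intro G
      ext t
      simp only [Set.mem_setOf_eq, Set.mem_univ, iff_true]
      exact ⟨0, fun i => isEmptyElim i, fun i => isEmptyElim i, fun i => isEmptyElim i⟩
    unfold hypersphereNumber
    rw [huniv, huniv, huniv, max_self]
  · obtain ⟨i₀⟩ := hV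
    set S := fun G : SimpleGraph V =>
      {t | ∃ (d : ℕ) (u : V → EuclideanSpace ℝ (Fin d)), IsHypersphereRep G u t} with hS
    have hbdd : ∀ G : SimpleGraph V, BddBelow (S G) := by
      intro G
      refine ⟨0, fun t ht => ?_⟩
      obtain ⟨d, u, hu⟩ := ht
      rw [← hu.2 i₀]
      positivity
    have hne : ∀ G : SimpleGraph V, (S G).Nonempty := fun G => ⟨1 / 2, exists_simplex_rep G⟩
    have hsub₁ : S (G₁ ⊔ G₂) ⊆ S G₁ := by
      rintro t ⟨d, u, hu⟩
      exact ⟨d, u, fun i j hij => hu.1 i j (Or.inl hij), hu.2⟩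
    have hsub₂ : S (G₁ ⊔ G₂) ⊆ S G₂ := by
      rintro t ⟨d, u, hu⟩
      exact ⟨d, u, fun i j hij => hu.1 i j (Or.inr hij), hu.2⟩
    show sInf (S (G₁ ⊔ G₂)) = max (sInf (S G₁)) (sInf (S G₂))
    refine le_antisymm ?_ (max_le (csInf_le_csInf (hbdd _) (hne _) hsub₁)
      (csInf_le_csInf (hbdd _) (hne _) hsub₂))
    refine le_of_forall_pos_le_add fun ε hε => le_of_lt ?_
    
    obtain ⟨t₁, ht₁S, ht₁⟩ := Real.lt_sInf_add_pos (hne G₁) hε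
    obtain ⟨t₂, ht₂S, ht₂⟩ := Real.lt_sInf_add_pos (hne G₂) hε
    obtain ⟨d₁, u₁, hu₁⟩ := ht₁S
    obtain ⟨d₂, u₂, hu₂⟩ := ht₂S
    rcases le_total t₁ t₂ with h | h
    · have hmem : t₂ ∈ S (G₁ ⊔ G₂) := glue G₁ G₂ V₁ V₂ hcover hE₁ hE₂ hclique h hu₁ hu₂
      calc sInf (S (G₁ ⊔ G₂)) ≤ t₂ := csInf_le (hbdd _) hmem
        _ < sInf (S G₂) + ε := ht₂
        _ ≤ max (sInf (S G₁)) (sInf (S G₂)) + ε := by gcongr; exact le_max_right _ _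
    · have hclique' : ∀ i ∈ V₂ ∩ V₁, ∀ j ∈ V₂ ∩ V₁, i ≠ j → G₂.Adj i j ∧ G₁.Adj i j := by
        intro i hi j hj hij
        exact (hclique i ⟨hi.2, hi.1⟩ j ⟨hj.2, hj.1⟩ hij).symm
      have hmem : t₁ ∈ S (G₂ ⊔ G₁) :=
        glue G₂ G₁ V₂ V₁ (by rw [Set.union_comm]; exact hcover) hE₂ hE₁ hclique' h hu₂ hu₁
      rw [sup_comm] at hmem
      calc sInf (S (G₁ ⊔ G₂)) ≤ t₁ := csInf_le (hbdd _) hmem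
        _ < sInf (S G₁) + ε := ht₁
        _ ≤ max (sInf (S G₁)) (sInf (S G₂)) + ε := by gcongr; exact le_max_left _ _
end

section
/- Let G be a graph and i a vertex with nonempty neighborhood N(i). Then the hypersphere number of the induced subgraph on N(i) satisfies t(G[N(i)]) ≤ 1 − 1/(4·t(G)). -/
open scoped RealInnerProductSpace

/-- Every finite graph has a hypersphere representation with `t = 1/2`:
place the vertices at `(√2)⁻¹ • eᵢ`. -/
lemma exists_half_rep {W : Type*} [Fintype W] (H : SimpleGraph W) :
    ∃ (d : ℕ) (u : W → EuclideanSpace ℝ (Fin d)), IsHypersphereRep H u (1/2) := by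
  classical
  refine ⟨Fintype.card W,
    fun x => (Real.sqrt 2)⁻¹ • EuclideanSpace.single (Fintype.equivFin W x) (1 : ℝ), ?_, ?_⟩
  · intro i j hij
    have hne : Fintype.equivFin W i ≠ Fintype.equivFin W j :=
      (Equiv.injective _).ne (H.ne_of_adj hij)
    have hinner : ⟪EuclideanSpace.single (Fintype.equivFin W i) (1 : ℝ),
        EuclideanSpace.single (Fintype.equivFin W j) (1 : ℝ)⟫ = 0 := by
      rw [EuclideanSpace.inner_single_left]
      simp [EuclideanSpace.single_apply, hne.symm, H.ne_of_adj hij]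
    have h2 : (0:ℝ) ≤ 2 := by norm_num
    have hs : Real.sqrt 2 ^ 2 = 2 := Real.sq_sqrt h2
    have hpos : (0:ℝ) < Real.sqrt 2 := Real.sqrt_pos.mpr (by norm_num)
    have hsq : ‖((Real.sqrt 2)⁻¹ • EuclideanSpace.single (Fintype.equivFin W i) (1 : ℝ))
        - ((Real.sqrt 2)⁻¹ • EuclideanSpace.single (Fintype.equivFin W j) (1 : ℝ))‖ ^ 2 = 1 := by
      rw [norm_sub_sq_real, real_inner_smul_left, real_inner_smul_right, hinner,
        norm_smul, norm_smul]
      simp only [norm_inv, Real.norm_eq_abs, abs_of_pos hpos, EuclideanSpace.norm_single,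
        norm_one, mul_one, mul_zero]
      field_simp
      linarith [hs]
    have hnn : (0:ℝ) ≤ ‖((Real.sqrt 2)⁻¹ • EuclideanSpace.single (Fintype.equivFin W i) (1 : ℝ))
        - ((Real.sqrt 2)⁻¹ • EuclideanSpace.single (Fintype.equivFin W j) (1 : ℝ))‖ :=
      norm_nonneg _
    nlinarith [hsq, hnn]
  · intro i
    rw [norm_smul]
    have hpos : (0:ℝ) < Real.sqrt 2 := Real.sqrt_pos.mpr (by norm_num)
    have hs : Real.sqrt 2 ^ 2 = 2 := Real.sq_sqrt (by norm_num)
    simp only [norm_inv, Real.norm_eq_abs, abs_of_pos hpos, EuclideanSpace.norm_single, norm_one,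
      mul_one]
    field_simp
    linarith [hs]

/-- Neighborhood bound: `t(G[N(v)]) ≤ 1 − 1/(4 t(G))` for a vertex `v` with nonempty
neighborhood. -/
theorem hypersphereNumber_neighborhood {V : Type*} [Fintype V]
    (G : SimpleGraph V) (v : V) (hv : (G.neighborSet v).Nonempty) :
    hypersphereNumber (SimpleGraph.induce (G.neighborSet v) G)
      ≤ 1 - 1 / (4 * hypersphereNumber G) := by
  classical
  obtain ⟨j₀, hj₀⟩ := hv
  set S : Set ℝ :=
    {t | ∃ (d : ℕ) (u : V → EuclideanSpace ℝ (Fin d)), IsHypersphereRep G u t} with hS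
  set S' : Set ℝ :=
    {t | ∃ (d : ℕ) (u : ↥(G.neighborSet v) → EuclideanSpace ℝ (Fin d)),
      IsHypersphereRep (SimpleGraph.induce (G.neighborSet v) G) u t} with hS'
  -- every element of S is ≥ 1/4
  have hSlb : ∀ t ∈ S, (1/4 : ℝ) ≤ t := by
    rintro t ⟨d, u, hu, hnorm⟩
    have hadj : G.Adj v j₀ := hj₀
    have h1 : ‖u v - u j₀‖ = 1 := hu v j₀ hadj
    have h2 : ‖u v - u j₀‖ ≤ ‖u v‖ + ‖u j₀‖ := norm_sub_le _ _
    have hv2 : ‖u v‖ ^ 2 = t := hnorm v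
    have hj2 : ‖u j₀‖ ^ 2 = t := hnorm j₀
    nlinarith [norm_nonneg (u v), norm_nonneg (u j₀), sq_nonneg (‖u v‖ - ‖u j₀‖),
      sq_nonneg (‖u v‖ + ‖u j₀‖)]
  -- every element of S' is ≥ 0
  have hS'lb : ∀ t ∈ S', (0 : ℝ) ≤ t := by
    rintro t ⟨d, u, hu, hnorm⟩
    have := hnorm ⟨j₀, hj₀⟩
    nlinarith [norm_nonneg (u ⟨j₀, hj₀⟩)]
  have hSne : S.Nonempty := by
    obtain ⟨d, u, hu⟩ := exists_half_rep G
    exact ⟨1/2, d, u, hu⟩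
  have hS'ne : S'.Nonempty := by
    obtain ⟨d, u, hu⟩ := exists_half_rep (SimpleGraph.induce (G.neighborSet v) G)
    exact ⟨1/2, d, u, hu⟩
  have hSbdd : BddBelow S := ⟨1/4, fun t ht => hSlb t ht⟩
  have hS'bdd : BddBelow S' := ⟨0, fun t ht => hS'lb t ht⟩
  set A : ℝ := sInf S' with hA
  set T : ℝ := sInf S with hT
  have hTge : (1/4 : ℝ) ≤ T := le_csInf hSne hSlb
  -- A ≤ 1/2
  have hAhalf : A ≤ 1/2 := by
    obtain ⟨d, u, hu⟩ := exists_half_rep (SimpleGraph.induce (G.neighborSet v) G)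
    exact csInf_le hS'bdd ⟨d, u, hu⟩
  -- key: for every t ∈ S, A ≤ 1 - 1/(4t)
  have hkey : ∀ t ∈ S, A ≤ 1 - 1/(4*t) := by
    rintro t ⟨d, u, hu, hnorm⟩
    have ht : (1/4 : ℝ) ≤ t := hSlb t ⟨d, u, hu, hnorm⟩
    have htpos : (0:ℝ) < t := by linarith
    set lam : ℝ := (2*t - 1)/(2*t) with hlam
    set w : ↥(G.neighborSet v) → EuclideanSpace ℝ (Fin d) :=
      fun j => u j.1 - lam • u v with hw
    refine csInf_le hS'bdd ⟨d, w, ?_, ?_⟩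
    · intro i j hij
      have hadj : G.Adj i.1 j.1 := hij
      have : w i - w j = u i.1 - u j.1 := by
        simp only [hw]
        abel
      rw [this]
      exact hu i.1 j.1 hadj
    · intro j
      have hadj : G.Adj v j.1 := j.2
      have h1 : ‖u v - u j.1‖ = 1 := hu v j.1 hadj
      have hv2 : ‖u v‖ ^ 2 = t := hnorm v
      have hj2 : ‖u j.1‖ ^ 2 = t := hnorm j.1
      have hinner : ⟪u v, u j.1⟫ = (2*t - 1)/2 := by
        have := norm_sub_sq_real (u v) (u j.1)
        rw [h1, hv2, hj2] at this
        linarith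
      have hinner' : ⟪u j.1, u v⟫ = (2*t - 1)/2 := by
        rw [real_inner_comm]; exact hinner
      have : ‖w j‖ ^ 2 = t - 2 * (lam * ((2*t-1)/2)) + lam^2 * t := by
        simp only [hw]
        rw [norm_sub_sq_real, real_inner_smul_right, hinner', hj2, norm_smul]
        rw [mul_pow]
        simp only [Real.norm_eq_abs, sq_abs, hv2]
      rw [this, hlam]
      field_simp
      ring
  -- deduce A ≤ 1 - 1/(4T)
  have h1A : (1/2 : ℝ) ≤ 1 - A := by linarith
  have hlb : (1/(4*(1-A)) : ℝ) ≤ T := by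
    refine le_csInf hSne ?_
    intro t ht
    have h := hkey t ht
    have htpos : (0:ℝ) < t := by have := hSlb t ht; linarith
    have h' : 1/(4*t) ≤ 1 - A := by linarith
    rw [div_le_iff₀ (by positivity)] at h'
    rw [div_le_iff₀ (by nlinarith : (0:ℝ) < 4*(1-A))]
    nlinarith
  have hTpos : (0:ℝ) < T := by linarith
  have hfin : 1/(4*T) ≤ 1 - A := by
    rw [div_le_iff₀ (by positivity)]
    rw [div_le_iff₀ (by nlinarith : (0:ℝ) < 4*(1-A))] at hlb
    nlinarith
  have e1 : hypersphereNumber (SimpleGraph.induce (G.neighborSet v) G) = A := rfl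
  have e2 : hypersphereNumber G = T := rfl
  rw [e1, e2]
  linarith
end

section
/- For the complete graph K_n, the set of positive semidefinite matrices X with X_{ii} − 2X_{ij} + X_{jj} = 1 for all i ≠ j equals the set of matrices of the form (y·𝟙ᵀ + 𝟙·yᵀ + 2I)/4 where y ∈ ℝⁿ satisfies ‖𝟙‖·‖y‖ ≤ ⟨𝟙, y⟩ + 2 (here 𝟙 is the all-ones vector). -/
open Matrix

lemma Fapply (n : ℕ) (y : Fin n → ℝ) (i j : Fin n) :
    (((1 / 4 : ℝ) • (vecMulVec y (fun _ => 1) + vecMulVec (fun _ => 1) y +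
      (2 : ℝ) • (1 : Matrix (Fin n) (Fin n) ℝ)) : Matrix (Fin n) (Fin n) ℝ)) i j
    = (1/4) * (y i + y j + if i = j then 2 else 0) := by
  simp [vecMulVec_apply, Matrix.smul_apply, Matrix.add_apply, Matrix.one_apply]

lemma Fherm (n : ℕ) (y : Fin n → ℝ) :
    (((1 / 4 : ℝ) • (vecMulVec y (fun _ => 1) + vecMulVec (fun _ => 1) y +
      (2 : ℝ) • (1 : Matrix (Fin n) (Fin n) ℝ)) : Matrix (Fin n) (Fin n) ℝ)).IsHermitian := by
  unfold Matrix.IsHermitian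
  ext i j
  simp [Matrix.conjTranspose_apply, vecMulVec_apply, Matrix.smul_apply, Matrix.add_apply,
    Matrix.one_apply, eq_comm]
  split <;> ring

lemma quadform (n : ℕ) (y x : Fin n → ℝ) :
    x ⬝ᵥ ((1 / 4 : ℝ) • (vecMulVec y (fun _ => 1) + vecMulVec (fun _ => 1) y +
      (2 : ℝ) • (1 : Matrix (Fin n) (Fin n) ℝ))) *ᵥ x
    = (1/2) * ((∑ i, x i * y i) * (∑ i, x i) + ∑ i, x i ^ 2) := by
  have h : ∀ i : Fin n, (∑ j, (1/4 : ℝ) * (y i + y j + if i = j then 2 else 0) * x j)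
      = (1/4) * (y i * (∑ j, x j) + (∑ j, y j * x j) + 2 * x i) := by
    intro i
    rw [Finset.sum_congr rfl (fun j _ => by ring :
      ∀ j ∈ Finset.univ, (1/4 : ℝ) * (y i + y j + if i = j then 2 else 0) * x j
        = (1/4 * y i) * x j + (1/4) * (y j * x j) + (1/4) * ((if i = j then 2 else 0) * x j))]
    simp only [Finset.sum_add_distrib, ← Finset.mul_sum, ite_mul, zero_mul,
      Finset.sum_ite_eq, Finset.mem_univ, if_true]
    ring
  simp only [dotProduct, mulVec, Fapply, h]
  rw [Finset.sum_congr rfl (fun i _ => by ring :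
    ∀ i ∈ Finset.univ, x i * ((1/4 : ℝ) * (y i * (∑ j, x j) + (∑ j, y j * x j) + 2 * x i))
      = ((∑ j, x j)/4) * (x i * y i) + ((∑ j, y j * x j)/4) * x i + (1/2) * (x i)^2)]
  simp only [Finset.sum_add_distrib, ← Finset.mul_sum]
  rw [Finset.sum_congr rfl (fun j _ => mul_comm (y j) (x j) :
    ∀ j ∈ Finset.univ, y j * x j = x j * y j)]
  ring

/-- The feasible Gram matrices of unit-distance representations of `Kₙ`:
PSD matrices with `X_{ii} − 2X_{ij} + X_{jj} = 1` for all `i ≠ j` are exactly the matrices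
`(y𝟙ᵀ + 𝟙yᵀ + 2I)/4` with `‖𝟙‖‖y‖ ≤ ⟨𝟙, y⟩ + 2`. -/
theorem unitDistGram_completeGraph (n : ℕ) :
    {X : Matrix (Fin n) (Fin n) ℝ | X.PosSemidef ∧
      ∀ i j, i ≠ j → X i i - 2 * X i j + X j j = 1}
    = {X : Matrix (Fin n) (Fin n) ℝ | ∃ y : Fin n → ℝ,
        Real.sqrt n * Real.sqrt (∑ i, y i ^ 2) ≤ (∑ i, y i) + 2 ∧
        X = (1 / 4 : ℝ) •
          (vecMulVec y (fun _ => 1) + vecMulVec (fun _ => 1) y +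
            (2 : ℝ) • (1 : Matrix (Fin n) (Fin n) ℝ))} := by
  ext X
  simp only [Set.mem_setOf_eq]
  constructor
  · rintro ⟨hpsd, hcon⟩
    set y : Fin n → ℝ := fun i => 2 * X i i - 1 with hy
    have hXeq : X = (1 / 4 : ℝ) • (vecMulVec y (fun _ => 1) + vecMulVec (fun _ => 1) y +
        (2 : ℝ) • (1 : Matrix (Fin n) (Fin n) ℝ)) := by
      ext i j
      rw [Fapply]
      by_cases hij : i = j
      · subst hij
        rw [if_pos rfl]
        show X i i = 1/4 * ((2 * X i i - 1) + (2 * X i i - 1) + 2)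
        ring
      · have h := hcon i j hij
        rw [if_neg hij]
        show X i j = 1/4 * ((2 * X i i - 1) + (2 * X j j - 1) + 0)
        linarith
    refine ⟨y, ?_, hXeq⟩
    set s : ℝ := ∑ i, y i with hs
    set S : ℝ := ∑ i, y i ^ 2 with hS
    set a : ℝ := Real.sqrt n with hadef
    set b : ℝ := Real.sqrt S with hbdef
    have hS0 : 0 ≤ S := Finset.sum_nonneg (fun i _ => sq_nonneg _)
    have ha2 : a ^ 2 = (n : ℝ) := Real.sq_sqrt (Nat.cast_nonneg n)
    have hb2 : b ^ 2 = S := Real.sq_sqrt hS0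
    have ha0 : 0 ≤ a := Real.sqrt_nonneg _
    have hb0 : 0 ≤ b := Real.sqrt_nonneg _
    have hab0 : 0 ≤ a * b := mul_nonneg ha0 hb0
    have hCS : s ^ 2 ≤ (n : ℝ) * S := by
      have h := Finset.sum_mul_sq_le_sq_mul_sq Finset.univ (fun _ : Fin n => (1:ℝ)) y
      simpa [hs, hS] using h
    set x : Fin n → ℝ := fun i => b - a * y i with hx
    have hq : (0:ℝ) ≤ x ⬝ᵥ X *ᵥ x := by
      have h := hpsd.dotProduct_mulVec_nonneg x
      simpa using h
    rw [hXeq, quadform] at hq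
    have h1 : ∑ i, x i * y i = b * s - a * S := by
      rw [Finset.sum_congr rfl (fun i _ => by ring :
        ∀ i ∈ Finset.univ, x i * y i = b * y i - a * (y i ^ 2))]
      rw [Finset.sum_sub_distrib, ← Finset.mul_sum, ← Finset.mul_sum]
    have h2 : ∑ i, x i = a ^ 2 * b - a * s := by
      rw [Finset.sum_sub_distrib, Finset.sum_const, Finset.card_univ, Fintype.card_fin,
        ← Finset.mul_sum, nsmul_eq_mul, ← ha2]
    have h3 : ∑ i, x i ^ 2 = a ^ 2 * b ^ 2 - 2 * a * b * s + a ^ 2 * S := by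
      rw [Finset.sum_congr rfl (fun i _ => by ring :
        ∀ i ∈ Finset.univ, x i ^ 2 = b ^ 2 - (2 * a * b) * y i + a ^ 2 * (y i ^ 2))]
      rw [Finset.sum_add_distrib, Finset.sum_sub_distrib, Finset.sum_const, Finset.card_univ,
        Fintype.card_fin, ← Finset.mul_sum, ← Finset.mul_sum, nsmul_eq_mul, ← ha2]
      try ring
    rw [h1, h2, h3, ← hb2] at hq
    have hCS' : s ^ 2 ≤ a ^ 2 * b ^ 2 := by rw [ha2, hb2]; exact hCS
    clear_value y s S a b x
    clear hy hs hS hadef hbdef hx hXeq hpsd hcon h1 h2 h3 hCS hb2 ha2 hS0 X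
    by_contra hcontra
    push_neg at hcontra
    have hid : (1:ℝ)/2 * ((b * s - a * b^2) * (a ^ 2 * b - a * s)
        + (a ^ 2 * b ^ 2 - 2 * a * b * s + a ^ 2 * b^2))
        = 1/2 * ((a*b) * ((a*b - s) * (2 - a*b + s))) := by ring
    rw [hid] at hq
    have h6 : (a*b - s) * (2 - a*b + s) < 0 :=
      mul_neg_of_pos_of_neg (by linarith) (by linarith)
    have h7 : a * b ≤ 0 := by
      by_contra h
      push_neg at h
      nlinarith [mul_neg_of_pos_of_neg h h6]
    have h8 : a * b = 0 := le_antisymm h7 hab0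
    have h9 : s ^ 2 ≤ 0 := by nlinarith [hCS', h8]
    have h10 : s = 0 := by nlinarith [sq_nonneg s, h9]
    rw [h8, h10] at hcontra
    norm_num at hcontra
  · rintro ⟨y, hineq, rfl⟩
    constructor
    · refine Matrix.PosSemidef.of_dotProduct_mulVec_nonneg (Fherm n y) (fun x => ?_)
      have hsx : star x = x := by simp
      rw [hsx, quadform]
      set s : ℝ := ∑ i, y i with hs
      set S : ℝ := ∑ i, y i ^ 2 with hS
      set a : ℝ := Real.sqrt n with hadef
      set b : ℝ := Real.sqrt S with hbdef
      set q : ℝ := ∑ i, x i * y i with hqdef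
      set p : ℝ := ∑ i, x i with hpdef
      set N : ℝ := ∑ i, x i ^ 2 with hNdef
      have hS0 : 0 ≤ S := Finset.sum_nonneg (fun i _ => sq_nonneg _)
      have hN0 : 0 ≤ N := Finset.sum_nonneg (fun i _ => sq_nonneg _)
      have ha2 : a ^ 2 = (n : ℝ) := Real.sq_sqrt (Nat.cast_nonneg n)
      have hb2 : b ^ 2 = S := Real.sq_sqrt hS0
      have ha0 : 0 ≤ a := Real.sqrt_nonneg _
      have hb0 : 0 ≤ b := Real.sqrt_nonneg _
      have hCSq : q ^ 2 ≤ N * b ^ 2 := by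
        have h := Finset.sum_mul_sq_le_sq_mul_sq Finset.univ x y
        rw [← hb2] at hS
        simpa [hqdef, hNdef, ← hS] using h
      have hCSp : p ^ 2 ≤ a ^ 2 * N := by
        have h := Finset.sum_mul_sq_le_sq_mul_sq Finset.univ (fun _ : Fin n => (1:ℝ)) x
        rw [ha2]
        simpa [hpdef, hNdef] using h
      have hCS3 : (a * q - b * p) ^ 2 ≤ (2 * a^2 * b^2 - 2 * a * b * s) * N := by
        have h := Finset.sum_mul_sq_le_sq_mul_sq Finset.univ (fun i => a * y i - b) x
        have hl : ∑ i, (a * y i - b) * x i = a * q - b * p := by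
          rw [Finset.sum_congr rfl (fun i _ => by ring :
            ∀ i ∈ Finset.univ, (a * y i - b) * x i = a * (x i * y i) - b * x i)]
          rw [Finset.sum_sub_distrib, ← Finset.mul_sum, ← Finset.mul_sum]
        have hr : ∑ i, (a * y i - b) ^ 2 = 2 * a^2 * b^2 - 2 * a * b * s := by
          rw [Finset.sum_congr rfl (fun i _ => by ring :
            ∀ i ∈ Finset.univ, (a * y i - b) ^ 2 = a ^ 2 * (y i ^ 2) - (2 * a * b) * y i + b ^ 2)]
          rw [Finset.sum_add_distrib, Finset.sum_sub_distrib, Finset.sum_const, Finset.card_univ,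
            Fintype.card_fin, ← Finset.mul_sum, ← Finset.mul_sum, nsmul_eq_mul, ← ha2, ← hS, hb2]
          ring
        rw [hl, hr] at h
        exact h
      have hab0 : 0 ≤ a * b := mul_nonneg ha0 hb0
      clear_value s S a b q p N
      clear hs hS hadef hbdef hqdef hpdef hNdef hsx hS0 hb2 ha2
      have key : 0 ≤ q * p + N := by
        rcases eq_or_lt_of_le hab0 with hab | hab
        · have h7 : q ^ 2 * p ^ 2 ≤ (N * b ^ 2) * (a ^ 2 * N) :=
            mul_le_mul hCSq hCSp (sq_nonneg p) (by positivity)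
          have h8 : (N * b ^ 2) * (a ^ 2 * N) = (a * b) ^ 2 * N ^ 2 := by ring
          have h9 : (q * p) ^ 2 ≤ 0 := by
            rw [← hab] at h8
            nlinarith [h7, h8]
          have h10 : q * p = 0 := by nlinarith [sq_nonneg (q * p), h9]
          linarith
        · have h11 : 2 * a * b * (a * b - s) * N ≤ 4 * (a * b) * N := by
            have : a * b - s ≤ 2 := by linarith
            nlinarith [mul_nonneg (le_of_lt hab) hN0, this]
          have h12 : 0 ≤ (a * q + b * p) ^ 2 := sq_nonneg _
          have h13 : 0 ≤ (a * b) * (q * p + N) := by nlinarith [hCS3, h11, h12]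
          nlinarith [h13, hab]
      linarith
    · intro i j hij
      rw [Fapply, Fapply, Fapply, if_pos rfl, if_pos rfl, if_neg hij]
      ring
end

section
/- Let G be a connected graph with Laplacian operator 𝓛_G and let W be a symmetric V×V matrix. There exists z ∈ ℝ^E with W − 𝓛_G(z) positive definite if and only if 𝟙ᵀW𝟙 > 0, where 𝟙 is the all-ones vector. -/
open Matrix

/-- The Laplacian map `𝓛_G : ℝ^E → Sym(V)`, here applied to a symmetric edge-weighting
`z` (so that `lapOfWeights G z = ∑_{{i,j} ∈ E} 2 z_{ij} (e_i − e_j)(e_i − e_j)ᵀ`, which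
ranges over exactly the image of `𝓛_G` as `z` ranges over symmetric weightings). -/
noncomputable def lapOfWeights {V : Type*} [Fintype V] [DecidableEq V]
    (G : SimpleGraph V) [DecidableRel G.Adj] (z : V → V → ℝ) : Matrix V V ℝ :=
  ∑ i, ∑ j, if G.Adj i j then
    z i j • vecMulVec (Pi.single i (1 : ℝ) - Pi.single j 1)
      (Pi.single i (1 : ℝ) - Pi.single j 1)
  else 0

section aux

variable {V : Type*} [Fintype V] [DecidableEq V]

lemma vecMulVec_mulVec' (u v x : V → ℝ) : (vecMulVec u v) *ᵥ x = (v ⬝ᵥ x) • u := by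
  funext a
  simp [mulVec, vecMulVec, dotProduct, Finset.mul_sum, Finset.sum_mul,
    mul_assoc, mul_comm, mul_left_comm]

lemma qf_sum {ι : Type*} (s : Finset ι) (M : ι → Matrix V V ℝ) (x : V → ℝ) :
    x ⬝ᵥ (∑ k ∈ s, M k) *ᵥ x = ∑ k ∈ s, x ⬝ᵥ (M k) *ᵥ x := by
  classical
  induction s using Finset.cons_induction with
  | empty => simp
  | cons a s ha ih =>
    rw [Finset.sum_cons, Finset.sum_cons, Matrix.add_mulVec, dotProduct_add, ih]

lemma quad_term (i j : V) (c : ℝ) (x : V → ℝ) :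
    x ⬝ᵥ (c • vecMulVec (Pi.single i (1 : ℝ) - Pi.single j 1)
      (Pi.single i (1 : ℝ) - Pi.single j 1)) *ᵥ x = c * (x i - x j) ^ 2 := by
  have h1 : (Pi.single i (1 : ℝ) - Pi.single j 1) ⬝ᵥ x = x i - x j := by
    simp [sub_dotProduct, single_dotProduct]
  have h2 : x ⬝ᵥ (Pi.single i (1 : ℝ) - Pi.single j 1) = x i - x j := by
    simp [dotProduct_sub, dotProduct_single]
  rw [smul_mulVec, dotProduct_smul, vecMulVec_mulVec', dotProduct_smul, h1, h2]
  simp only [smul_eq_mul]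
  ring

lemma quad_lap (G : SimpleGraph V) [DecidableRel G.Adj] (z : V → V → ℝ) (x : V → ℝ) :
    x ⬝ᵥ (lapOfWeights G z) *ᵥ x
      = ∑ i, ∑ j, if G.Adj i j then z i j * (x i - x j) ^ 2 else 0 := by
  rw [lapOfWeights, qf_sum]
  refine Finset.sum_congr rfl fun i _ => ?_
  rw [qf_sum]
  refine Finset.sum_congr rfl fun j _ => ?_
  split
  · exact quad_term i j _ x
  · simp

lemma lap_isSymm (G : SimpleGraph V) [DecidableRel G.Adj] (z : V → V → ℝ) :
    (lapOfWeights G z).IsSymm := by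
  unfold lapOfWeights
  rw [Matrix.IsSymm]
  rw [Matrix.transpose_sum]
  refine Finset.sum_congr rfl fun i _ => ?_
  rw [Matrix.transpose_sum]
  refine Finset.sum_congr rfl fun j _ => ?_
  split
  · ext a b
    simp [Matrix.transpose_apply, vecMulVec_apply, mul_comm]
  · simp

lemma qf_continuous (M : Matrix V V ℝ) : Continuous fun x : V → ℝ => x ⬝ᵥ M *ᵥ x := by
  have h : (fun x : V → ℝ => x ⬝ᵥ M *ᵥ x) = fun x => ∑ i, ∑ j, x i * (M i j * x j) := by
    funext x
    simp [dotProduct, mulVec, Finset.mul_sum, mul_assoc]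
  rw [h]
  refine continuous_finset_sum _ fun i _ => continuous_finset_sum _ fun j _ => ?_
  exact (continuous_apply i).mul (continuous_const.mul (continuous_apply j))

lemma qf_smul (M : Matrix V V ℝ) (c : ℝ) (x : V → ℝ) :
    (c • x) ⬝ᵥ M *ᵥ (c • x) = c ^ 2 * (x ⬝ᵥ M *ᵥ x) := by
  rw [Matrix.mulVec_smul, smul_dotProduct, dotProduct_smul]
  simp [smul_eq_mul]
  ring

end aux

/-- For a connected graph `G` and symmetric `W`, there is an edge-weighting `z` with
`W − 𝓛_G(z)` positive definite iff `𝟙ᵀW𝟙 > 0`. -/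
theorem exists_lap_lt_iff {V : Type*} [Fintype V] [DecidableEq V]
    (G : SimpleGraph V) [DecidableRel G.Adj] (hG : G.Connected)
    (W : Matrix V V ℝ) (hW : W.IsSymm) :
    (∃ z : V → V → ℝ, (∀ i j, z i j = z j i) ∧ (W - lapOfWeights G z).PosDef) ↔
      0 < ∑ i, ∑ j, W i j := by
  classical
  have hne : Nonempty V := hG.nonempty
  -- the all-ones vector
  set one : V → ℝ := fun _ => 1 with hone
  have hone_ne : one ≠ 0 := by
    intro h
    obtain ⟨v⟩ := hne
    have := congrFun h v
    simp [hone] at this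
  have hqW_one : one ⬝ᵥ W *ᵥ one = ∑ i, ∑ j, W i j := by
    simp [dotProduct, mulVec, hone]
  constructor
  · rintro ⟨z, hz, hpd⟩
    have h := hpd.dotProduct_mulVec_pos hone_ne
    have hstar : (star one : V → ℝ) = one := by simp
    rw [hstar] at h
    rw [Matrix.sub_mulVec, dotProduct_sub, quad_lap] at h
    have hzero : (∑ i, ∑ j, if G.Adj i j then z i j * (one i - one j) ^ 2 else 0) = 0 := by
      refine Finset.sum_eq_zero fun i _ => Finset.sum_eq_zero fun j _ => ?_
      split <;> simp [hone]
    rw [hzero, sub_zero, hqW_one] at h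
    exact h
  · intro hsum
    -- quadratic forms
    set qW : (V → ℝ) → ℝ := fun x => x ⬝ᵥ W *ᵥ x with hqW
    set qL : (V → ℝ) → ℝ := fun x =>
      ∑ i, ∑ j, if G.Adj i j then (x i - x j) ^ 2 else 0 with hqL
    have hqL_nonneg : ∀ x, 0 ≤ qL x := fun x =>
      Finset.sum_nonneg fun i _ => Finset.sum_nonneg fun j _ => by positivity
    -- if qL x = 0 then x is constant
    have hqL_const : ∀ x : V → ℝ, qL x = 0 → ∀ i j, x i = x j := by
      intro x hx i j
      have hadj : ∀ a b, G.Adj a b → x a = x b := by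
        intro a b hab
        have h0 : ∀ i ∈ Finset.univ, (0:ℝ) ≤ ∑ j, if G.Adj i j then (x i - x j) ^ 2 else 0 :=
          fun i _ => Finset.sum_nonneg fun j _ => by positivity
        have h1 := (Finset.sum_eq_zero_iff_of_nonneg h0).mp hx a (Finset.mem_univ a)
        have h2 : ∀ j ∈ Finset.univ, (0:ℝ) ≤ if G.Adj a j then (x a - x j) ^ 2 else 0 :=
          fun j _ => by positivity
        have h3 := (Finset.sum_eq_zero_iff_of_nonneg h2).mp h1 b (Finset.mem_univ b)
        rw [if_pos hab] at h3
        have := pow_eq_zero_iff (n := 2) (by norm_num) |>.mp h3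
        linarith [sub_eq_zero.mp this]
      obtain ⟨w⟩ := hG.preconnected i j
      induction w with
      | nil => rfl
      | cons h p ih => exact (hadj _ _ h).trans ih
    -- continuity
    have hcW : Continuous qW := qf_continuous W
    have hcL : Continuous qL := by
      have : qL = fun x => x ⬝ᵥ (lapOfWeights G (fun _ _ => 1)) *ᵥ x := by
        funext x
        rw [quad_lap]
        simp [hqL]
      rw [this]
      exact qf_continuous _
    -- compactness setup
    set S : Set (V → ℝ) := Metric.sphere 0 1 with hS
    have hScompact : IsCompact S := isCompact_sphere 0 1
    have hSne : S.Nonempty := by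
      obtain ⟨v⟩ := hne
      refine ⟨Pi.single v 1, ?_⟩
      simp [hS, Pi.norm_single]
    -- min of qW on sphere
    obtain ⟨x₀, hx₀S, hx₀min⟩ := hScompact.exists_isMinOn hSne hcW.continuousOn
    set m := qW x₀ with hm
    -- key claim: there is t ≥ 0 such that qW x + t * qL x > 0 on the sphere
    have hconst_pos : ∀ x ∈ S, qL x = 0 → 0 < qW x := by
      intro x hxS hxL
      have hc : ∀ i j, x i = x j := hqL_const x hxL
      obtain ⟨v⟩ := hne
      obtain ⟨c, hxv⟩ : ∃ c : ℝ, x = c • one :=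
        ⟨x v, funext fun a => by simp [hone, hc a v]⟩
      have hc0 : c ≠ 0 := by
        intro h
        rw [h, zero_smul] at hxv
        rw [hxv] at hxS
        simp [hS] at hxS
      have hq : qW x = c ^ 2 * (∑ i, ∑ j, W i j) := by
        rw [hqW]
        simp only [hxv]
        rw [qf_smul, hqW_one]
      rw [hq]
      have : (0:ℝ) < c ^ 2 := by positivity
      exact mul_pos this hsum
    obtain ⟨t, ht0, ht⟩ : ∃ t : ℝ, 0 ≤ t ∧ ∀ x ∈ S, 0 < qW x + t * qL x := by
      by_cases hK : (S ∩ {x | qW x ≤ 0}).Nonempty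
      · have hKcompact : IsCompact (S ∩ {x | qW x ≤ 0}) :=
          hScompact.inter_right (isClosed_le hcW continuous_const)
        obtain ⟨y₀, hy₀, hy₀min⟩ := hKcompact.exists_isMinOn hK hcL.continuousOn
        have hmle : m ≤ 0 := le_trans (hx₀min hy₀.1) hy₀.2
        have hy₀pos : 0 < qL y₀ := by
          rcases lt_or_eq_of_le (hqL_nonneg y₀) with h | h
          · exact h
          · exfalso
            have := hconst_pos y₀ hy₀.1 h.symm
            exact absurd hy₀.2 (not_le.mpr this)
        refine ⟨(1 - m) / qL y₀, ?_, ?_⟩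
        · apply div_nonneg _ (le_of_lt hy₀pos)
          linarith
        · intro x hxS
          by_cases hx : qW x ≤ 0
          · have h1 : qL y₀ ≤ qL x := hy₀min ⟨hxS, hx⟩
            have h2 : m ≤ qW x := hx₀min hxS
            have h3 : (1 - m) / qL y₀ * qL x ≥ (1 - m) / qL y₀ * qL y₀ := by
              apply mul_le_mul_of_nonneg_left h1
              apply div_nonneg _ (le_of_lt hy₀pos)
              have : m ≤ 0 := le_trans h2 hx
              linarith
            have h4 : (1 - m) / qL y₀ * qL y₀ = 1 - m := by
              field_simp
            nlinarith
          · push_neg at hx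
            have : 0 ≤ (1 - m) / qL y₀ * qL x := by
              apply mul_nonneg _ (hqL_nonneg x)
              apply div_nonneg _ (le_of_lt hy₀pos)
              linarith
            linarith
      · refine ⟨0, le_refl 0, fun x hxS => ?_⟩
        rw [Set.not_nonempty_iff_eq_empty] at hK
        have : x ∉ S ∩ {x | qW x ≤ 0} := by rw [hK]; exact Set.notMem_empty x
        simp only [Set.mem_inter_iff, Set.mem_setOf_eq, not_and] at this
        have := this hxS
        push_neg at this
        linarith
    -- now take z = -t everywhere
    refine ⟨fun _ _ => -t, fun _ _ => rfl, Matrix.posDef_iff_dotProduct_mulVec.mpr ⟨?_, ?_⟩⟩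
    · -- IsHermitian
      rw [Matrix.IsHermitian, Matrix.conjTranspose_eq_transpose_of_trivial,
        Matrix.transpose_sub, hW, (lap_isSymm G _)]
    · -- positivity
      intro x hx
      have hstar : (star x : V → ℝ) = x := by simp
      rw [hstar, Matrix.sub_mulVec, dotProduct_sub, quad_lap]
      have hform : (∑ i, ∑ j, if G.Adj i j then -t * (x i - x j) ^ 2 else 0)
          = -t * qL x := by
        rw [hqL, Finset.mul_sum]
        refine Finset.sum_congr rfl fun i _ => ?_
        rw [Finset.mul_sum]
        refine Finset.sum_congr rfl fun j _ => ?_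
        split <;> simp
      rw [hform]
      -- normalize x
      have hxn : ‖x‖ ≠ 0 := norm_ne_zero_iff.mpr hx
      obtain ⟨c, u, hcpos, huS, hxu⟩ : ∃ (c : ℝ) (u : V → ℝ), 0 < c ∧ u ∈ S ∧ x = c • u := by
        refine ⟨‖x‖, ‖x‖⁻¹ • x, (norm_nonneg x).lt_of_ne' hxn, ?_, ?_⟩
        · simp [hS, norm_smul, abs_of_nonneg (norm_nonneg x), inv_mul_cancel₀ hxn]
        · rw [smul_smul, mul_inv_cancel₀ hxn, one_smul]
      have hqWx : qW x = c ^ 2 * qW u := by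
        rw [hqW]; simp only [hxu]; rw [qf_smul]
      have hqLx : qL x = c ^ 2 * qL u := by
        have hL : qL = fun y => y ⬝ᵥ (lapOfWeights G (fun _ _ => 1)) *ᵥ y := by
          funext y
          rw [quad_lap]
          simp [hqL]
        rw [hL]
        simp only [hxu]
        exact qf_smul _ c u
      have hu_pos := ht u huS
      have hnorm_pos : (0:ℝ) < c ^ 2 := by positivity
      have hkey : x ⬝ᵥ W *ᵥ x - -t * qL x = c ^ 2 * (qW u + t * qL u) := by
        have hx' : x ⬝ᵥ W *ᵥ x = qW x := rfl
        rw [hx', hqWx, hqLx]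
        ring
      rw [hkey]
      exact mul_pos hnorm_pos hu_pos
end

section
/- Let G be a graph, W a symmetric V×V matrix with 𝟙ᵀW𝟙 = 0. If the infimum t_W(G) = inf{⟨W,X⟩ : 𝓛_G*(X) = 𝟙, X ⪰ 0} is finite (> −∞), then W𝟙 = 0. -/
open Matrix

/-- If `𝟙ᵀW𝟙 = 0` and `t_W(G) = inf {⟨W,X⟩ : 𝓛_G^*(X) = 𝟙, X ⪰ 0}` is bounded below
(finite), then `W𝟙 = 0`. -/
theorem ones_in_null_of_bddBelow {V : Type*} [Fintype V]
    (G : SimpleGraph V) (W : Matrix V V ℝ) (hW : W.IsSymm)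
    (h0 : ∑ i, ∑ j, W i j = 0)
    (hbdd : BddBelow {r : ℝ | ∃ X : Matrix V V ℝ, X.PosSemidef ∧
      (∀ i j, G.Adj i j → X i i - 2 * X i j + X j j = 1) ∧ r = (W * X).trace}) :
    W *ᵥ (fun _ => (1 : ℝ)) = 0 := by
  classical
  funext k
  show (∑ j, W k j * 1) = 0
  simp only [mul_one]
  set a : ℝ := ∑ j, W k j with ha
  by_contra hne
  set e : V → ℝ := fun i => if i = k then 1 else 0 with he
  set d : V → ℝ := fun i => if i = k then 0 else 1 with hd
  set w : ℝ → V → ℝ := fun t i => e i + 2*t with hw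
  set X : ℝ → Matrix V V ℝ :=
    fun t => (1/2 : ℝ) • (diagonal d + vecMulVec (w t) (w t)) with hX
  have hsymm : ∀ i k' : V, W i k' = W k' i := by
    intro i k'
    conv_lhs => rw [← hW]
    rfl
  have hcol : (∑ i, W i k) = a := by
    rw [ha]; exact Finset.sum_congr rfl fun i _ => hsymm i k
  have hej : ∀ i : V, (∑ j, W i j * e j) = W i k := by
    intro i; simp [he, mul_ite]
  set c : ℝ := (1/2) * ((∑ i, W i i * d i) + W k k) with hc
  -- trace value
  have htr : ∀ t : ℝ, (W * X t).trace = c + 2 * t * a := by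
    intro t
    rw [hX]
    simp only [Matrix.mul_smul, Matrix.mul_add, trace_smul, trace_add, smul_eq_mul]
    have h1 : (W * diagonal d).trace = ∑ i, W i i * d i := by
      simp [Matrix.trace, Matrix.mul_apply, Matrix.diag, diagonal_apply, Finset.sum_ite_eq,
        mul_ite, mul_zero]
    have h2 : (W * vecMulVec (w t) (w t)).trace = W k k + 4 * t * a := by
      have hdb : (W * vecMulVec (w t) (w t)).trace
          = ∑ i, ∑ j, W i j * (w t j * w t i) := by
        simp [Matrix.trace, Matrix.mul_apply, Matrix.diag, vecMulVec_apply, mul_assoc]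
      rw [hdb]
      have inner : ∀ i : V, (∑ j, W i j * (w t j * w t i))
          = W i k * e i + 2*t*W i k + (∑ j, W i j) * (2*t*e i + 4*t^2) := by
        intro i
        have hpt : ∀ j : V, W i j * (w t j * w t i)
            = (W i j * e j) * (e i + 2*t) + W i j * (2*t*e i + 4*t^2) := by
          intro j; rw [hw]; ring
        simp_rw [hpt]
        rw [Finset.sum_add_distrib, ← Finset.sum_mul, ← Finset.sum_mul, hej]
        ring
      simp_rw [inner]
      rw [Finset.sum_add_distrib, Finset.sum_add_distrib]
      have t1 : (∑ i, W i k * e i) = W k k := by simp [he, mul_ite]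
      have t2 : (∑ i, 2*t*W i k) = 2*t*a := by
        rw [← Finset.mul_sum, hcol]
      have t3 : (∑ i, (∑ j, W i j) * (2*t*e i + 4*t^2)) = 2*t*a := by
        have hpt : ∀ i : V, (∑ j, W i j) * (2*t*e i + 4*t^2)
            = 2*t*((∑ j, W i j) * e i) + 4*t^2*(∑ j, W i j) := by
          intro i; ring
        simp_rw [hpt]
        rw [Finset.sum_add_distrib, ← Finset.mul_sum, ← Finset.mul_sum, h0, mul_zero,
          add_zero]
        have : (∑ i, (∑ j, W i j) * e i) = ∑ j, W k j := by
          simp [he, mul_ite]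
        rw [this, ← ha]
      rw [t1, t2, t3]
      ring
    rw [h1, h2]
    ring
  -- feasibility
  have hfeas : ∀ t : ℝ, (c + 2 * t * a) ∈ {r : ℝ | ∃ X : Matrix V V ℝ, X.PosSemidef ∧
      (∀ i j, G.Adj i j → X i i - 2 * X i j + X j j = 1) ∧ r = (W * X).trace} := by
    intro t
    refine ⟨X t, ?_, ?_, (htr t).symm⟩
    · rw [Matrix.posSemidef_iff_dotProduct_mulVec]; constructor
      · -- Hermitian
        rw [Matrix.IsHermitian]
        ext i j
        simp only [hX, conjTranspose_apply, Matrix.smul_apply, Matrix.add_apply,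
          diagonal_apply, vecMulVec_apply, smul_eq_mul, star_trivial]
        rcases eq_or_ne i j with hij | hij
        · subst hij; ring
        · rw [if_neg hij, if_neg (Ne.symm hij)]; ring
      · -- quadratic form
        intro x
        have hsx : star x = x := star_trivial x
        rw [hsx]
        set s : ℝ := ∑ j, w t j * x j with hs
        have hv : X t *ᵥ x = fun i => (1/2) * (d i * x i) + (1/2) * w t i * s := by
          funext i
          show (∑ j, X t i j * x j) = _
          have hpt : ∀ j : V, X t i j * x j
              = (1/2)*((if i = j then d i else 0)*x j) + ((1/2)* w t i)*(w t j * x j) := by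
            intro j
            simp only [hX, Matrix.smul_apply, Matrix.add_apply, diagonal_apply,
              vecMulVec_apply, smul_eq_mul]
            ring
          have hds : (∑ j, (if i = j then d i else 0) * x j) = d i * x i := by
            simp
          simp_rw [hpt]
          rw [Finset.sum_add_distrib, ← Finset.mul_sum, ← Finset.mul_sum, hds, ← hs]
          try ring
        rw [hv]
        have hdp : (x ⬝ᵥ fun i => (1/2) * (d i * x i) + (1/2) * w t i * s)
            = (1/2) * (∑ i, d i * (x i * x i)) + (1/2) * (s * s) := by
          simp only [dotProduct]
          have hpt : ∀ i : V, x i * ((1/2) * (d i * x i) + (1/2) * w t i * s)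
              = (1/2) * (d i * (x i * x i)) + ((1/2) * s) * (w t i * x i) := by
            intro i; ring
          simp_rw [hpt]
          rw [Finset.sum_add_distrib, ← Finset.mul_sum, ← Finset.mul_sum, ← hs]
          ring
        rw [hdp]
        have hd1 : 0 ≤ ∑ i, d i * (x i * x i) := by
          refine Finset.sum_nonneg fun i _ => mul_nonneg ?_ (mul_self_nonneg _)
          rw [hd]; positivity
        nlinarith [mul_self_nonneg s]
    · intro i j hadj
      have hij : i ≠ j := hadj.ne
      simp only [hX, Matrix.smul_apply, Matrix.add_apply, diagonal_apply_eq,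
        diagonal_apply_ne _ hij, vecMulVec_apply, smul_eq_mul, hw, he, hd]
      rcases eq_or_ne i k with hi | hi <;> rcases eq_or_ne j k with hj | hj
      · exact absurd (hi.trans hj.symm) hij
      · simp only [if_pos hi, if_neg hj]; ring
      · simp only [if_neg hi, if_pos hj]; ring
      · simp only [if_neg hi, if_neg hj]; ring
  -- contradiction
  obtain ⟨lb, hlb⟩ := hbdd
  have hle : ∀ t : ℝ, lb ≤ c + 2 * t * a := fun t => hlb (hfeas t)
  have h2a : (2 : ℝ) * a ≠ 0 := mul_ne_zero two_ne_zero hne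
  have heq : 2 * ((lb - c - 1) / (2 * a)) * a = lb - c - 1 := by
    field_simp
  have hthis := hle ((lb - c - 1) / (2 * a))
  rw [heq] at hthis
  linarith
end
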